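/- The generalized row sum rating of a team is strictly increasing in its own score: for ε > 0, every diagonal entry of (I + εL)⁻¹ is strictly positive; consequently, if s'_i > s_i and s'_j = s_j for all j ≠ i, then x_i(ε; s') > x_i(ε; s). -/

import Mathlib

open Matrix Finset

def lap {n : ℕ} (M : Matrix (Fin n) (Fin n) ℝ) : Matrix (Fin n) (Fin n) ℝ :=
  Matrix.of fun i j => if i = j then ∑ k ∈ Finset.univ.erase i, M i k else -M i j

lemma lap_mulVec {n : ℕ} (M : Matrix (Fin n) (Fin n) ℝ) (hdiag : ∀ i, M i i = 0)
    (v : Fin n → ℝ) (i : Fin n) :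
    (lap M *ᵥ v) i = ∑ j, M i j * (v i - v j) := by
  have h1 : (lap M *ᵥ v) i = ∑ j, lap M i j * v j := rfl
  rw [h1, ← Finset.add_sum_erase _ _ (Finset.mem_univ i),
      ← Finset.add_sum_erase (f := fun j => M i j * (v i - v j)) _ (Finset.mem_univ i)]
  simp only [lap, Matrix.of_apply, eq_self_iff_true, if_true, hdiag i, zero_mul, sub_self,
    mul_zero, zero_add]
  rw [Finset.sum_mul, ← Finset.sum_add_distrib]
  apply Finset.sum_congr rfl
  intro j hj
  have hji : i ≠ j := fun h => (Finset.mem_erase.1 hj).1 h.symm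
  rw [if_neg hji]
  ring

lemma quad_nonneg {n : ℕ} (M : Matrix (Fin n) (Fin n) ℝ)
    (hsymm : M.IsSymm) (hnonneg : ∀ i j, 0 ≤ M i j) (hdiag : ∀ i, M i i = 0)
    (v : Fin n → ℝ) : 0 ≤ v ⬝ᵥ (lap M *ᵥ v) := by
  have key : 2 * (v ⬝ᵥ (lap M *ᵥ v)) = ∑ i, ∑ j, M i j * (v i - v j)^2 := by
    have h1 : v ⬝ᵥ (lap M *ᵥ v) = ∑ i, ∑ j, M i j * (v i * (v i - v j)) := by
      unfold dotProduct
      apply Finset.sum_congr rfl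
      intro i _
      rw [lap_mulVec M hdiag, Finset.mul_sum]
      apply Finset.sum_congr rfl
      intro j _
      ring
    have h2 : v ⬝ᵥ (lap M *ᵥ v) = ∑ i, ∑ j, M i j * (v j * (v j - v i)) := by
      rw [h1, Finset.sum_comm]
      apply Finset.sum_congr rfl; intro i _
      apply Finset.sum_congr rfl; intro j _
      rw [hsymm.apply i j]
    rw [two_mul]
    nth_rewrite 1 [h1]
    nth_rewrite 1 [h2]
    rw [← Finset.sum_add_distrib]
    apply Finset.sum_congr rfl; intro i _
    rw [← Finset.sum_add_distrib]
    apply Finset.sum_congr rfl; intro j _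
    ring
  nlinarith [Finset.sum_nonneg (fun i (_ : i ∈ Finset.univ) =>
    Finset.sum_nonneg (fun j (_ : j ∈ Finset.univ) =>
      mul_nonneg (hnonneg i j) (sq_nonneg (v i - v j))))]

lemma A_posDef {n : ℕ} (M : Matrix (Fin n) (Fin n) ℝ)
    (hsymm : M.IsSymm) (hnonneg : ∀ i j, 0 ≤ M i j) (hdiag : ∀ i, M i i = 0)
    (ε : ℝ) (hε : 0 < ε) : (1 + ε • lap M).PosDef := by
  refine posDef_iff_dotProduct_mulVec.mpr ⟨?_, ?_⟩
  · have hls : (lap M).IsSymm := by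
      ext i j
      simp only [Matrix.transpose_apply, lap, Matrix.of_apply]
      by_cases h : i = j
      · subst h; simp
      · rw [if_neg (fun he => h he.symm), if_neg h, hsymm.apply i j]
    have : (1 + ε • lap M)ᵀ = 1 + ε • lap M := by
      rw [Matrix.transpose_add, Matrix.transpose_one, Matrix.transpose_smul, hls]
    rw [Matrix.IsHermitian, Matrix.conjTranspose_eq_transpose_of_trivial]
    exact this
  · intro v hv
    have hstar : star v = v := by
      funext k; simp
    rw [hstar, Matrix.add_mulVec, Matrix.one_mulVec, Matrix.smul_mulVec,
      dotProduct_add, dotProduct_smul]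
    have h1 : 0 < v ⬝ᵥ v := by
      rcases Function.ne_iff.1 hv with ⟨k, hk⟩
      have : 0 < v k * v k := mul_self_pos.2 hk
      calc (0:ℝ) < v k * v k := this
        _ ≤ ∑ j, v j * v j := Finset.single_le_sum
            (fun j _ => mul_self_nonneg (v j)) (Finset.mem_univ k)
        _ = v ⬝ᵥ v := rfl
    have h2 : 0 ≤ v ⬝ᵥ (lap M *ᵥ v) := quad_nonneg M hsymm hnonneg hdiag v
    have : 0 ≤ ε • (v ⬝ᵥ (lap M *ᵥ v)) := smul_nonneg hε.le h2
    linarith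

/-- The generalized row sum rating of a team is strictly increasing in its own score:
every diagonal entry of `(I + εL)⁻¹` is strictly positive; consequently, if `s' i > s i`
and `s' j = s j` for all `j ≠ i`, then `x' i > x i`. -/
theorem grs_strictly_increasing_in_own_score
    (n : ℕ) (hn : 1 ≤ n) (M : Matrix (Fin n) (Fin n) ℝ)
    (hsymm : M.IsSymm) (hnonneg : ∀ i j, 0 ≤ M i j) (hdiag : ∀ i, M i i = 0)
    (ε : ℝ) (hε : 0 < ε) (s s' x x' : Fin n → ℝ) (i : Fin n)
    (hsi : s' i > s i) (hsj : ∀ j, j ≠ i → s' j = s j)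
    (hx : (1 + ε • lap M) *ᵥ x = s)
    (hx' : (1 + ε • lap M) *ᵥ x' = s') :
    (∀ k : Fin n, 0 < (1 + ε • lap M)⁻¹ k k) ∧ x' i > x i := by
  set A := 1 + ε • lap M with hA
  have hpd : A.PosDef := A_posDef M hsymm hnonneg hdiag ε hε
  have hinvpd : A⁻¹.PosDef := hpd.inv
  have hdiagpos : ∀ k : Fin n, 0 < A⁻¹ k k := by
    intro k
    have hne : (Pi.single k 1 : Fin n → ℝ) ≠ 0 := by
      intro h
      have := congrFun h k
      simp at this
    have := hinvpd.dotProduct_mulVec_pos hne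
    have hstar : star (Pi.single k 1 : Fin n → ℝ) = Pi.single k 1 := by
      funext j; simp
    rw [hstar, Matrix.mulVec_single] at this
    simpa [dotProduct, Pi.single_apply] using this
  refine ⟨hdiagpos, ?_⟩
  have hunit : IsUnit A.det := hpd.det_pos.ne'.isUnit
  set c := s' i - s i with hc
  have hcpos : 0 < c := sub_pos.2 hsi
  set e : Fin n → ℝ := Pi.single i 1 with he
  have hAd : A *ᵥ (x' - x) = c • e := by
    rw [Matrix.mulVec_sub, hx, hx']
    funext j
    by_cases hj : j = i
    · subst hj; simp [hc, he]
    · simp [he, Pi.single_apply, hj, hsj j hj]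
  have hd : x' - x = c • (A⁻¹ *ᵥ e) := by
    have : A⁻¹ *ᵥ (A *ᵥ (x' - x)) = x' - x := by
      rw [Matrix.mulVec_mulVec, Matrix.nonsing_inv_mul A hunit, Matrix.one_mulVec]
    rw [← this, hAd, Matrix.mulVec_smul]
  have hdi : x' i - x i = c * A⁻¹ i i := by
    have := congrFun hd i
    simpa [he, Matrix.mulVec_single] using this
  have : 0 < x' i - x i := by
    rw [hdi]; exact mul_pos hcpos (hdiagpos i)
  linarith
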